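/- Let p₀,p₁,p₂,p₃ ≥ 0 with Σp_j = 1 and θ_j ∈ ℝ satisfy Σ_j p_j e^{2iθ_j} = 0 (i.e. the state z_j = √(p_j)e^{iθ_j} has zero 4-tangle). Then, writing t_m for the tangle of the m-th bipartite cut as given by t = 2(1 − Σ λ_j²) over the appropriate eigenvalue distributions, one has t₁ + t₂ + t₃ = 4, where t₁ = 2(1−Σ_j P_j²), t₂ = 2(1−Σ_j Q_j²), t₃ = 2(1−Σ_j R_j²) with P,Q,R defined from z via the orthogonal matrices A and B of the previous statement. -/

import Mathlib

open Complex

noncomputable section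

/-- The orthogonal matrix A. -/
def Amat : Matrix (Fin 4) (Fin 4) ℂ :=
  (1/2 : ℂ) • !![1,1,1,1; 1,1,-1,-1; 1,-1,1,-1; 1,-1,-1,1]

/-- The orthogonal matrix B. -/
def Bmat : Matrix (Fin 4) (Fin 4) ℂ :=
  (1/2 : ℂ) • !![1,-1,-1,-1; 1,-1,1,1; 1,1,-1,1; 1,1,1,-1]

/-- For a state with zero 4-tangle (Σⱼ pⱼ e^{2iθⱼ} = 0), the three two-vs-two
    tangles sum to 4. -/
theorem sum_tangles_eq_four_of_zero_four_tangle
    (p : Fin 4 → ℝ) (θ : Fin 4 → ℝ)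
    (hp : ∀ j, 0 ≤ p j) (hsum : ∑ j, p j = 1)
    (z : Fin 4 → ℂ)
    (hz : ∀ j, z j = Real.sqrt (p j) * Complex.exp (θ j * Complex.I))
    (h4tangle : ∑ j, p j * Complex.exp (2 * θ j * Complex.I) = 0) :
    (2 * (1 - ∑ j, (‖z j‖)^2 * (‖z j‖)^2)) +
    (2 * (1 - ∑ j, (‖∑ k, Amat j k * z k‖)^2 * (‖∑ k, Amat j k * z k‖)^2)) +
    (2 * (1 - ∑ j, (‖∑ k, Bmat j k * z k‖)^2 * (‖∑ k, Bmat j k * z k‖)^2))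
      = 4 := by
  -- z j * conj (z j) = p j
  have hzc : ∀ j, z j * (starRingEnd ℂ) (z j) = (p j : ℂ) := by
    intro j
    rw [Complex.mul_conj, hz j, Complex.normSq_mul, Complex.normSq_ofReal,
      Real.mul_self_sqrt (hp j), Complex.normSq_eq_norm_sq, Complex.norm_exp_ofReal_mul_I]
    norm_num
  -- z j ^ 2 = p j * exp (2 θ j I)
  have hzsq : ∀ j, z j ^ 2 = (p j : ℂ) * Complex.exp (2 * θ j * Complex.I) := by
    intro j
    rw [hz j, mul_pow, ← Complex.exp_nat_mul]
    norm_num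
    rw [← Complex.ofReal_pow, Real.sq_sqrt (hp j)]
    ring_nf
  have hs : z 0 ^ 2 + z 1 ^ 2 + z 2 ^ 2 + z 3 ^ 2 = 0 := by
    have : ∑ j, z j ^ 2 = 0 := by
      simp only [hzsq]; exact_mod_cast h4tangle
    simpa [Fin.sum_univ_four] using this
  have hS : z 0 * (starRingEnd ℂ) (z 0) + z 1 * (starRingEnd ℂ) (z 1)
      + z 2 * (starRingEnd ℂ) (z 2) + z 3 * (starRingEnd ℂ) (z 3) = 1 := by
    simp only [hzc]
    have : ((∑ j, p j : ℝ) : ℂ) = 1 := by rw [hsum]; norm_num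
    simpa [Fin.sum_univ_four] using this
  have hsb : (starRingEnd ℂ) (z 0) ^ 2 + (starRingEnd ℂ) (z 1) ^ 2
      + (starRingEnd ℂ) (z 2) ^ 2 + (starRingEnd ℂ) (z 3) ^ 2 = 0 := by
    have := congrArg (starRingEnd ℂ) hs
    simpa using this
  simp only [Complex.sq_norm]
  set_option maxRecDepth 100000 in
  set_option maxHeartbeats 1000000 in
  simp only [Amat, Bmat, Fin.sum_univ_four, Matrix.smul_apply, Matrix.of_apply,
    Matrix.cons_val', Matrix.cons_val_zero, Matrix.cons_val_one, Matrix.head_cons,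
    Matrix.empty_val', Matrix.cons_val_fin_one, Matrix.head_fin_const,
    Matrix.cons_val_two, Matrix.cons_val_three, Matrix.vecHead, Matrix.vecTail,
    Function.comp, Matrix.tail_cons, Matrix.cons_val_succ, smul_eq_mul]
  rw [← Complex.ofReal_inj]
  set_option maxHeartbeats 1000000 in
  push_cast
  set_option maxRecDepth 100000 in
  set_option maxHeartbeats 1000000 in
  simp only [← Complex.mul_conj]
  set_option maxRecDepth 100000 in
  set_option maxHeartbeats 1000000 in
  simp only [map_add, map_mul, map_one, map_neg, map_div₀, map_ofNat]
  set_option maxRecDepth 100000 in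
  set_option maxHeartbeats 2000000 in
  linear_combination (-2 * (z 0 * (starRingEnd ℂ) (z 0) + z 1 * (starRingEnd ℂ) (z 1)
      + z 2 * (starRingEnd ℂ) (z 2) + z 3 * (starRingEnd ℂ) (z 3) + 1)) * hS
    + (-((starRingEnd ℂ) (z 0) ^ 2 + (starRingEnd ℂ) (z 1) ^ 2
      + (starRingEnd ℂ) (z 2) ^ 2 + (starRingEnd ℂ) (z 3) ^ 2)) * hs
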